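/- Let T be a stochastic matrix of order n with a single essential class, written in block form T = [[S, 1 − S1], [u^T, 1 − 1^T u]] where S is (n−1)×(n−1) with spectral radius less than 1, 1 is the all-ones vector, and u ≥ 0. Then Kemeny's constant satisfies K(T) = trace((I−S)^{−1}) − (1/(1 + u^T (I−S)^{−1} 1)) · trace((I−S)^{−1} 1 u^T (I−S)^{−1}). -/

import Mathlib

open Finset Matrix

def IsStochastic {n : ℕ} (T : Matrix (Fin n) (Fin n) ℝ) : Prop :=
  (∀ i j, 0 ≤ T i j) ∧ ∀ i, ∑ j, T i j = 1

/-- One step of the Markov chain: a transition with positive probability. -/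
def chainStep {n : ℕ} (T : Matrix (Fin n) (Fin n) ℝ) (i j : Fin n) : Prop := 0 < T i j

/-- `j` is reachable from `i` in the directed graph of `T`. -/
def reaches {n : ℕ} (T : Matrix (Fin n) (Fin n) ℝ) : Fin n → Fin n → Prop :=
  Relation.ReflTransGen (chainStep T)

/-- A state is essential if every state reachable from it can reach it back. -/
def EssentialState {n : ℕ} (T : Matrix (Fin n) (Fin n) ℝ) (i : Fin n) : Prop :=
  ∀ j, reaches T i j → reaches T j i

/-- `T` has a single essential class of indices. -/
def SingleEssentialClass {n : ℕ} (T : Matrix (Fin n) (Fin n) ℝ) : Prop :=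
  (∃ i, EssentialState T i) ∧
    ∀ i j, EssentialState T i → EssentialState T j → reaches T i j

noncomputable def kemeny {n : ℕ} (T : Matrix (Fin n) (Fin n) ℝ) : ℝ :=
  ((((Matrix.charpoly (T.map (Complex.ofReal))).roots.erase 1).map
      (fun z => (1 - z)⁻¹)).sum).re

/-! ### Auxiliary lemmas -/

open Polynomial

lemma aux_charpoly_eval {m : Type*} [Fintype m] [DecidableEq m] {R : Type*} [CommRing R]
    (N : Matrix m m R) (t : R) :
    (Matrix.charpoly N).eval t = (t • (1 : Matrix m m R) - N).det := by
  rw [Matrix.charpoly, ← Polynomial.coe_evalRingHom, RingHom.map_det]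
  congr 1
  ext i j
  by_cases h : i = j <;> simp [charmatrix_apply, h, Matrix.one_apply, diagonal]

lemma aux_multiset_deriv (s : Multiset ℂ) (hs : ∀ z ∈ s, z ≠ 1) :
    (derivative ((s.map (fun z => X - C z)).prod)).eval 1 =
      ((s.map (fun z => X - C z)).prod).eval 1 * ((s.map (fun z => (1 - z)⁻¹)).sum) := by
  induction s using Multiset.induction with
  | empty => simp
  | cons a s ih =>
    have ha : a ≠ 1 := hs a (Multiset.mem_cons_self a s)
    have ih' := ih (fun z hz => hs z (Multiset.mem_cons_of_mem hz))
    simp only [Multiset.map_cons, Multiset.prod_cons, Multiset.sum_cons, derivative_mul,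
      eval_add, eval_mul, eval_sub, eval_X, eval_C, derivative_sub, derivative_X, derivative_C,
      sub_zero, eval_one, one_mul, ih']
    have h1a : (1 - a) ≠ 0 := sub_ne_zero.mpr (Ne.symm ha)
    field_simp

lemma aux_trace_inv_eq (m : Type*) [Fintype m] [DecidableEq m] (N : Matrix m m ℂ)
    (h : (Matrix.charpoly N).eval 1 ≠ 0) :
    Matrix.trace (1 - N)⁻¹ =
      ((Matrix.charpoly N).eval 1)⁻¹ * (derivative (Matrix.charpoly N)).eval 1 := by
  set p := Matrix.charpoly N with hp
  set A := (1 : Matrix m m ℂ) - N with hA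
  have hdet : A.det = p.eval 1 := by rw [aux_charpoly_eval]; norm_num; rfl
  have hdet0 : A.det ≠ 0 := by rw [hdet]; exact h
  have hu : IsUnit A.det := isUnit_iff_ne_zero.mpr hdet0
  set B := A⁻¹ with hB
  have hBA : B * A = 1 := Matrix.nonsing_inv_mul A hu
  set q : ℂ[X] := Matrix.det (1 + (X : ℂ[X]) • B.map C) with hq
  have h1 : (derivative q).eval 0 = Matrix.trace B := Matrix.derivative_det_one_add_X_smul B
  have hfac : (1 : Matrix m m ℂ[X]) + (X : ℂ[X]) • B.map C
      = B.map C * ((X : ℂ[X]) • 1 + A.map C) := by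
    rw [Matrix.mul_add, Matrix.mul_smul, Matrix.mul_one, ← Matrix.map_mul, hBA]
    rw [add_comm]
    congr 1
    ext i j
    by_cases hij : i = j <;> simp [Matrix.one_apply, hij]
  have hcomp : Matrix.det ((X : ℂ[X]) • 1 + A.map C) = p.comp (X + 1) := by
    have : p.comp (X + 1) = aeval ((X : ℂ[X]) + 1) p := by
      rw [comp_eq_aeval]
    rw [this, hp, Matrix.charpoly, ← AlgHom.coe_toRingHom, RingHom.map_det]
    congr 1
    ext i j
    by_cases hij : i = j <;>
      simp [charmatrix_apply, hij, Matrix.one_apply, diagonal, hA, map_sub, Matrix.sub_apply] <;>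
      ring
  have hq2 : q = C B.det * p.comp (X + 1) := by
    rw [hq, hfac, Matrix.det_mul, hcomp]
    congr 1
    exact (RingHom.map_det C B).symm
  have hBdet : B.det = (p.eval 1)⁻¹ := by
    rw [hB, Matrix.det_nonsing_inv, hdet, Ring.inverse_eq_inv]
  have h2 : (derivative q).eval 0 = B.det * (derivative p).eval 1 := by
    rw [hq2, derivative_mul, derivative_C, zero_mul, derivative_comp]
    simp
  rw [← h1, h2, hBdet]

lemma aux_sum_roots_inv {m : Type*} [Fintype m] [DecidableEq m] (N : Matrix m m ℂ)
    (h : (Matrix.charpoly N).eval 1 ≠ 0) :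
    (((Matrix.charpoly N).roots.map fun z => (1 - z)⁻¹).sum) = Matrix.trace (1 - N)⁻¹ := by
  set p := Matrix.charpoly N with hp
  have hmonic : p.Monic := Matrix.charpoly_monic N
  have hsplit : p.Splits := IsAlgClosed.splits p
  have hprod : p = (p.roots.map fun a => X - C a).prod :=
    (prod_multiset_X_sub_C_of_monic_of_roots_card_eq hmonic
      (splits_iff_card_roots.mp hsplit)).symm
  have hroots : ∀ z ∈ p.roots, z ≠ 1 := by
    intro z hz h1
    subst h1
    exact h (isRoot_of_mem_roots hz)
  have hd := aux_multiset_deriv p.roots hroots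
  rw [← hprod] at hd
  rw [aux_trace_inv_eq _ N h, ← hp, hd, ← mul_assoc, inv_mul_cancel₀ h, one_mul]

lemma aux_charpoly_conj {m : Type*} [Fintype m] [DecidableEq m] {R : Type*} [CommRing R]
    (P Pi A : Matrix m m R) (h : Pi * P = 1) :
    Matrix.charpoly (Pi * A * P) = Matrix.charpoly A := by
  have hch : charmatrix (Pi * A * P) = Pi.map C * charmatrix A * P.map C := by
    rw [charmatrix, charmatrix, RingHom.mapMatrix_apply, RingHom.mapMatrix_apply,
      Matrix.scalar_apply, ← Matrix.smul_one_eq_diagonal,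
      Matrix.mul_sub, Matrix.sub_mul, Matrix.mul_smul, Matrix.mul_one, Matrix.smul_mul,
      ← Matrix.map_mul, ← Matrix.map_mul, ← Matrix.map_mul, h,
      Matrix.map_one _ (map_zero C) (map_one C)]
  have hdet : (Pi.map C).det * (P.map C).det = 1 := by
    rw [← Matrix.det_mul, ← Matrix.map_mul, h, Matrix.map_one _ (map_zero C) (map_one C),
      Matrix.det_one]
  rw [Matrix.charpoly, Matrix.charpoly, hch, Matrix.det_mul, Matrix.det_mul]
  ring_nf
  rw [mul_comm ((Pi.map C).det), mul_assoc, hdet, mul_one]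

lemma aux_charpoly_block (n : ℕ) (T : Matrix (Fin (n + 1)) (Fin (n + 1)) ℝ)
    (hrow : ∀ i, ∑ j, T i j = 1)
    (S : Matrix (Fin n) (Fin n) ℝ)
    (hS : S = T.submatrix Fin.castSucc Fin.castSucc)
    (u : Fin n → ℝ)
    (hu : u = fun j => T (Fin.last n) (Fin.castSucc j)) :
    Matrix.charpoly T =
      Matrix.charpoly (S - vecMulVec (fun _ => (1 : ℝ)) u) * (X - 1) := by
  classical
  set e : Fin n ⊕ Fin 1 ≃ Fin (n + 1) := finSumFinEquiv
  have he1 : ∀ i : Fin n, e (Sum.inl i) = Fin.castSucc i := fun i => rfl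
  have he2 : ∀ j : Fin 1, e (Sum.inr j) = Fin.last n := by
    intro j
    have : j = 0 := Subsingleton.elim _ _
    subst this
    ext
    simp [e, finSumFinEquiv]
  set J : Matrix (Fin n) (Fin 1) ℝ := fun _ _ => 1 with hJ
  set b : Matrix (Fin n) (Fin 1) ℝ := fun i _ => T (Fin.castSucc i) (Fin.last n) with hb
  set u' : Matrix (Fin 1) (Fin n) ℝ := fun _ j => u j with hu'
  set d : Matrix (Fin 1) (Fin 1) ℝ := fun _ _ => T (Fin.last n) (Fin.last n) with hd
  have hB : Matrix.reindex e.symm e.symm T = fromBlocks S b u' d := by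
    ext a c
    cases a with
    | inl i => cases c with
      | inl j => simp [he1, hS, hb]; rfl
      | inr j => simp [he1, he2, hb]; rfl
    | inr i => cases c with
      | inl j => simp [he1, he2, hu', hu]; rfl
      | inr j => simp [he2, hd]; rfl
  set Q : Matrix (Fin n ⊕ Fin 1) (Fin n ⊕ Fin 1) ℝ := fromBlocks 1 J 0 1 with hQ
  set Qi : Matrix (Fin n ⊕ Fin 1) (Fin n ⊕ Fin 1) ℝ := fromBlocks 1 (-J) 0 1 with hQi
  have hQQ : Qi * Q = 1 := by
    rw [hQ, hQi, Matrix.fromBlocks_multiply]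
    simp [← Matrix.fromBlocks_one]
  have hSJ : S * J + b = J := by
    ext i k
    have := hrow (Fin.castSucc i)
    rw [Fin.sum_univ_castSucc] at this
    simp only [Matrix.add_apply, Matrix.mul_apply]
    simp only [hJ, hb, mul_one, hS]
    simpa using this
  have huJ : u' * J + d = 1 := by
    ext i k
    have := hrow (Fin.last n)
    rw [Fin.sum_univ_castSucc] at this
    have hik : i = 0 ∧ k = 0 := ⟨Subsingleton.elim _ _, Subsingleton.elim _ _⟩
    obtain ⟨rfl, rfl⟩ := hik
    simp only [Matrix.add_apply, Matrix.mul_apply, Matrix.one_apply_eq]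
    simp only [hJ, hu', hd, mul_one, hu]
    simpa using this
  have hJu : J * u' = vecMulVec (fun _ => (1 : ℝ)) u := by
    ext i j
    simp only [Matrix.mul_apply]
    simp [hJ, hu', vecMulVec_apply]
  have hone : Matrix.charpoly (1 : Matrix (Fin 1) (Fin 1) ℝ) = X - 1 := by
    rw [Matrix.charpoly, Matrix.det_fin_one]
    simp [charmatrix_apply]
  have hconj : Qi * fromBlocks S b u' d * Q =
      fromBlocks (S - vecMulVec (fun _ => (1 : ℝ)) u) 0 u' 1 := by
    rw [hQ, hQi, Matrix.fromBlocks_multiply, Matrix.fromBlocks_multiply]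
    simp only [Matrix.mul_one, Matrix.one_mul, Matrix.mul_zero, Matrix.zero_mul,
      add_zero, zero_add, Matrix.neg_mul]
    have e12 : (S + -(J * u')) * J + (b + -(J * d)) = (S * J + b) - J * (u' * J + d) := by
      rw [Matrix.add_mul, Matrix.neg_mul, Matrix.mul_assoc, Matrix.mul_add]
      abel
    rw [e12, hSJ, huJ, Matrix.mul_one, sub_self, hJu, ← sub_eq_add_neg]
  calc Matrix.charpoly T = Matrix.charpoly (Matrix.reindex e.symm e.symm T) :=
        (Matrix.charpoly_reindex e.symm T).symm
    _ = Matrix.charpoly (Qi * fromBlocks S b u' d * Q) := by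
        rw [hB, aux_charpoly_conj Q Qi _ hQQ]
    _ = Matrix.charpoly (S - vecMulVec (fun _ => (1 : ℝ)) u) * (X - 1) := by
        rw [hconj, Matrix.charpoly_fromBlocks_zero₁₂, hone]

lemma aux_isStochastic_mul {m : ℕ} {A B : Matrix (Fin m) (Fin m) ℝ}
    (hA : IsStochastic A) (hB : IsStochastic B) : IsStochastic (A * B) := by
  constructor
  · intro i j
    rw [Matrix.mul_apply]
    exact Finset.sum_nonneg fun k _ => mul_nonneg (hA.1 i k) (hB.1 k j)
  · intro i
    simp_rw [Matrix.mul_apply]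
    rw [Finset.sum_comm]
    simp_rw [← Finset.mul_sum, hB.2]
    simpa using hA.2 i

lemma aux_isStochastic_pow {m : ℕ} {A : Matrix (Fin m) (Fin m) ℝ}
    (hA : IsStochastic A) (k : ℕ) : IsStochastic (A ^ k) := by
  induction k with
  | zero =>
    refine ⟨fun i j => ?_, fun i => ?_⟩ <;> simp [Matrix.one_apply]
    positivity
  | succ k ih => rw [pow_succ]; exact aux_isStochastic_mul ih hA

lemma aux_stoch_mulVec_ge {m : ℕ} {P : Matrix (Fin (m + 1)) (Fin (m + 1)) ℝ}
    (hP : IsStochastic P) (w : Fin (m + 1) → ℝ) (i : Fin (m + 1)) :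
    Finset.univ.inf' ⟨0, Finset.mem_univ 0⟩ w ≤ (P *ᵥ w) i := by
  set m0 := Finset.univ.inf' ⟨0, Finset.mem_univ 0⟩ w with hm0
  have : (P *ᵥ w) i = ∑ j, P i j * w j := rfl
  rw [this]
  calc m0 = ∑ j, P i j * m0 := by rw [← Finset.sum_mul, hP.2 i, one_mul]
    _ ≤ ∑ j, P i j * w j :=
      Finset.sum_le_sum fun j _ =>
        mul_le_mul_of_nonneg_left (Finset.inf'_le _ (Finset.mem_univ j)) (hP.1 i j)

lemma aux_c_ne_zero (n : ℕ) (T : Matrix (Fin (n + 1)) (Fin (n + 1)) ℝ)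
    (hT : IsStochastic T)
    (S : Matrix (Fin n) (Fin n) ℝ)
    (hS : S = T.submatrix Fin.castSucc Fin.castSucc)
    (u : Fin n → ℝ)
    (hu : u = fun j => T (Fin.last n) (Fin.castSucc j))
    (hA : IsUnit (1 - S).det) :
    1 + u ⬝ᵥ ((1 - S)⁻¹ *ᵥ (fun _ => 1)) ≠ 0 := by
  intro hc
  set A := (1 : Matrix (Fin n) (Fin n) ℝ) - S with hAdef
  set x := A⁻¹ *ᵥ (fun _ => 1) with hx
  have hAx : A *ᵥ x = fun _ => 1 := by
    rw [hx, Matrix.mulVec_mulVec, Matrix.mul_nonsing_inv _ hA, Matrix.one_mulVec]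
  have hux : u ⬝ᵥ x = -1 := by
    have : 1 + u ⬝ᵥ x = 0 := hc
    linarith
  have hSx : ∀ i, (S *ᵥ x) i = x i - 1 := by
    intro i
    have := congrFun hAx i
    rw [hAdef, Matrix.sub_mulVec, Matrix.one_mulVec] at this
    have h2 : x i - (S *ᵥ x) i = 1 := this
    linarith [h2]
  set w : Fin (n + 1) → ℝ := Fin.snoc x 0 with hw
  have hTw : T *ᵥ w = fun i => w i - 1 := by
    funext i
    refine Fin.lastCases ?_ ?_ i
    · have : (T *ᵥ w) (Fin.last n) = ∑ j, T (Fin.last n) j * w j := rfl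
      rw [this, Fin.sum_univ_castSucc]
      simp only [hw, Fin.snoc_castSucc, Fin.snoc_last, mul_zero, add_zero]
      have : ∑ j : Fin n, T (Fin.last n) (Fin.castSucc j) * x j = u ⬝ᵥ x := by
        rw [hu]; rfl
      rw [this, hux]
      norm_num
    · intro i
      have h1 : (T *ᵥ w) (Fin.castSucc i) = ∑ j, T (Fin.castSucc i) j * w j := rfl
      rw [h1, Fin.sum_univ_castSucc]
      simp only [hw, Fin.snoc_castSucc, Fin.snoc_last, mul_zero, add_zero]
      have h2 : ∑ j : Fin n, T (Fin.castSucc i) (Fin.castSucc j) * x j = (S *ᵥ x) i := by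
        rw [hS]; rfl
      rw [h2]
      exact hSx i
  have hTone : T *ᵥ (fun _ => (1 : ℝ)) = fun _ => 1 := by
    funext i
    have : (T *ᵥ fun _ => (1:ℝ)) i = ∑ j, T i j * 1 := rfl
    rw [this]
    simp only [mul_one]
    exact hT.2 i
  have hpow : ∀ k : ℕ, (T ^ k) *ᵥ w = fun i => w i - k := by
    intro k
    induction k with
    | zero => simp [Matrix.one_mulVec]
    | succ k ih =>
      rw [pow_succ', ← Matrix.mulVec_mulVec, ih]
      have h3 : (fun i => w i - (k:ℝ)) = w - (k:ℝ) • (fun _ => (1:ℝ)) := by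
        funext i; simp
      rw [h3, Matrix.mulVec_sub, Matrix.mulVec_smul, hTone, hTw]
      funext i
      simp only [Pi.sub_apply, Pi.smul_apply, smul_eq_mul]
      push_cast
      ring
  set m0 := Finset.univ.inf' ⟨0, Finset.mem_univ 0⟩ w with hm0
  obtain ⟨k, hk⟩ := exists_nat_gt (-m0)
  have hge := aux_stoch_mulVec_ge (aux_isStochastic_pow hT k) w (Fin.last n)
  rw [hpow k] at hge
  simp only [hw, Fin.snoc_last] at hge
  have : (0 : ℝ) - k = -k := by ring
  rw [this] at hge
  linarith

lemma aux_mul_vecMulVec {m : Type*} [Fintype m] [DecidableEq m]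
    (N : Matrix m m ℝ) (x y : m → ℝ) :
    N * vecMulVec x y = vecMulVec (N *ᵥ x) y := by
  ext i j
  simp [Matrix.mul_apply, vecMulVec_apply, Matrix.mulVec, dotProduct,
    Finset.sum_mul, mul_assoc]

lemma aux_vecMulVec_mul_vecMulVec {m : Type*} [Fintype m] [DecidableEq m]
    (x y z w : m → ℝ) :
    vecMulVec x y * vecMulVec z w = (y ⬝ᵥ z) • vecMulVec x w := by
  ext i j
  simp only [Matrix.mul_apply, vecMulVec_apply, Matrix.smul_apply, dotProduct,
    Finset.sum_mul, smul_eq_mul]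
  congr 1
  funext k
  ring

lemma aux_sherman {m : Type*} [Fintype m] [DecidableEq m]
    (S : Matrix m m ℝ) (u : m → ℝ) (hA : IsUnit (1 - S).det)
    (hc : 1 + u ⬝ᵥ ((1 - S)⁻¹ *ᵥ (fun _ => 1)) ≠ 0) :
    ((1 - S) + vecMulVec (fun _ => 1) u) *
      ((1 - S)⁻¹ - (1 + u ⬝ᵥ ((1 - S)⁻¹ *ᵥ (fun _ => 1)))⁻¹ •
        ((1 - S)⁻¹ * vecMulVec (fun _ => 1) u * (1 - S)⁻¹)) = 1 := by
  set A := (1 : Matrix m m ℝ) - S with hAdef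
  set V := vecMulVec (fun _ => (1:ℝ)) u with hV
  set c := 1 + u ⬝ᵥ (A⁻¹ *ᵥ (fun _ => 1)) with hcdef
  have hAA : A * A⁻¹ = 1 := Matrix.mul_nonsing_inv _ hA
  have key : V * (A⁻¹ * V) = (c - 1) • V := by
    rw [hV, aux_mul_vecMulVec, aux_vecMulVec_mul_vecMulVec]
    congr 1
    rw [hcdef]
    ring
  rw [Matrix.add_mul, Matrix.mul_sub, Matrix.mul_sub, hAA, Matrix.mul_smul, Matrix.mul_smul]
  have h1 : A * (A⁻¹ * V * A⁻¹) = V * A⁻¹ := by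
    rw [← Matrix.mul_assoc, ← Matrix.mul_assoc, hAA, Matrix.one_mul]
  have h2 : V * (A⁻¹ * V * A⁻¹) = (c - 1) • (V * A⁻¹) := by
    rw [← Matrix.mul_assoc, key, Matrix.smul_mul]
  rw [h1, h2, smul_smul]
  have h5 : c⁻¹ * (c - 1) = 1 - c⁻¹ := by field_simp
  rw [h5, sub_smul, one_smul]
  abel

theorem kemeny_block_formula
    (n : ℕ) (T : Matrix (Fin (n + 1)) (Fin (n + 1)) ℝ)
    (hT : IsStochastic T) (hess : SingleEssentialClass T)
    (S : Matrix (Fin n) (Fin n) ℝ)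
    (hS : S = T.submatrix Fin.castSucc Fin.castSucc)
    (u : Fin n → ℝ)
    (hu : u = fun j => T (Fin.last n) (Fin.castSucc j))
    (hspec : ∀ z ∈ (Matrix.charpoly (S.map (Complex.ofReal))).roots, ‖z‖ < 1) :
    kemeny T = Matrix.trace (1 - S)⁻¹ -
      (1 + u ⬝ᵥ ((1 - S)⁻¹ *ᵥ (fun _ => 1)))⁻¹ *
        Matrix.trace ((1 - S)⁻¹ * Matrix.vecMulVec (fun _ => 1) u * (1 - S)⁻¹) := by
  classical
  have hrow := hT.2
  set V := vecMulVec (fun _ => (1:ℝ)) u with hV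
  set M := S - V with hM
  set c := 1 + u ⬝ᵥ ((1 - S)⁻¹ *ᵥ (fun _ => (1:ℝ))) with hcdef
  -- det (1 - S) ≠ 0
  have hdetS : (1 - S).det ≠ 0 := by
    intro h0
    have h1 : (Matrix.charpoly (S.map Complex.ofReal)).eval 1 = 0 := by
      have e1 : S.map Complex.ofReal = S.map Complex.ofRealHom := rfl
      rw [e1, Matrix.charpoly_map, Polynomial.eval_one_map, aux_charpoly_eval, one_smul, h0,
        map_zero]
    have hroot : (1:ℂ) ∈ (Matrix.charpoly (S.map Complex.ofReal)).roots := by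
      rw [Polynomial.mem_roots ((Matrix.charpoly_monic _).ne_zero)]
      exact h1
    have := hspec 1 hroot
    simp at this
  have hA : IsUnit (1 - S).det := isUnit_iff_ne_zero.mpr hdetS
  have hc : c ≠ 0 := aux_c_ne_zero n T hT S hS u hu hA
  have hright := aux_sherman S u hA hc
  set R := (1 - S)⁻¹ - c⁻¹ • ((1 - S)⁻¹ * V * (1 - S)⁻¹) with hR
  have h1M : (1 : Matrix (Fin n) (Fin n) ℝ) - M = (1 - S) + V := by
    rw [hM]; abel
  have hright' : ((1 : Matrix (Fin n) (Fin n) ℝ) - M) * R = 1 := by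
    rw [h1M, hR]
    exact hright
  have hdet1M : ((1 : Matrix (Fin n) (Fin n) ℝ) - M).det ≠ 0 :=
    (Matrix.isUnit_det_of_right_inverse hright').ne_zero
  -- charpoly factorization
  have hfac := aux_charpoly_block n T hrow S hS u hu
  set Mc := M.map Complex.ofReal with hMc
  have hfacC : Matrix.charpoly (T.map Complex.ofReal) = Matrix.charpoly Mc * (X - 1) := by
    have e1 : T.map Complex.ofReal = T.map Complex.ofRealHom := rfl
    have e2 : Mc = M.map Complex.ofRealHom := rfl
    rw [e1, e2, Matrix.charpoly_map, Matrix.charpoly_map, hfac, Polynomial.map_mul]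
    congr 1
    simp
  have hroots : (Matrix.charpoly (T.map Complex.ofReal)).roots.erase 1
      = (Matrix.charpoly Mc).roots := by
    have hX1 : (X - 1 : ℂ[X]) = X - C 1 := by rw [Polynomial.C_1]
    have hne : Matrix.charpoly Mc * (X - 1 : ℂ[X]) ≠ 0 := by
      rw [hX1]
      exact mul_ne_zero ((Matrix.charpoly_monic _).ne_zero) (Polynomial.X_sub_C_ne_zero 1)
    rw [hfacC, Polynomial.roots_mul hne, hX1, Polynomial.roots_X_sub_C, add_comm,
      Multiset.singleton_add, Multiset.erase_cons_head]
  have hMc1 : (Matrix.charpoly Mc).eval 1 ≠ 0 := by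
    have e2 : Mc = M.map Complex.ofRealHom := rfl
    rw [e2, Matrix.charpoly_map, Polynomial.eval_one_map, aux_charpoly_eval, one_smul]
    simpa using hdet1M
  have hsum := aux_sum_roots_inv Mc hMc1
  have hinvmap : ((1 : Matrix (Fin n) (Fin n) ℂ) - Mc)⁻¹ = R.map Complex.ofReal := by
    apply Matrix.inv_eq_right_inv
    have e3 : (1 : Matrix (Fin n) (Fin n) ℂ) - Mc
        = ((1 : Matrix (Fin n) (Fin n) ℝ) - M).map Complex.ofRealHom := by
      ext i j
      by_cases hij : i = j <;>
        simp [Matrix.map_apply, Matrix.one_apply, Matrix.sub_apply, hij, hMc]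
    have e4 : R.map Complex.ofReal = R.map Complex.ofRealHom := rfl
    rw [e3, e4, ← Matrix.map_mul, hright', Matrix.map_one _ (map_zero _) (map_one _)]
  have htr : Matrix.trace (R.map Complex.ofReal) = Complex.ofReal (Matrix.trace R) := by
    simp [Matrix.trace, Matrix.diag, Matrix.map_apply]
  rw [kemeny, hroots, hsum, hinvmap, htr, Complex.ofReal_re, hR, Matrix.trace_sub,
    Matrix.trace_smul, smul_eq_mul]
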